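/- If four distinct points x, y, x', y' in the plane satisfy pairwise distances ≥ d and the segments [x,y] and [x',y'] cross (intersect at an interior point of both), then max(|x−y|, |x'−y'|) ≥ √2 · d. -/

import Mathlib

open EuclideanGeometry in
lemma stewart_ineq {V : Type*} [NormedAddCommGroup V] [InnerProductSpace ℝ V]
    (d : ℝ) (hd : 0 ≤ d) {u v p : V} (q : V) (huv : u ≠ v) (hp : p ∈ openSegment ℝ u v)
    (h1 : d ≤ dist q u) (h2 : d ≤ dist q v) :
    d ^ 2 ≤ dist q p ^ 2 + dist p u * dist p v := by
  have hseg : p ∈ segment ℝ u v := openSegment_subset_segment ℝ u v hp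
  have hpu : p ≠ u := by
    rintro rfl
    exact huv ((left_mem_openSegment_iff).1 hp)
  have hpv : p ≠ v := by
    rintro rfl
    exact huv ((right_mem_openSegment_iff).1 hp)
  have hsbtw : Sbtw ℝ u p v := ⟨mem_segment_iff_wbtw.1 hseg, hpu, hpv⟩
  have hangle : ∠ u p v = Real.pi := hsbtw.angle₁₂₃_eq_pi
  have hst := EuclideanGeometry.dist_sq_mul_dist_add_dist_sq_mul_dist q u v p hangle
  have hsum : dist u p + dist p v = dist u v := dist_add_dist_of_mem_segment hseg
  have hduv : 0 < dist u v := dist_pos.2 huv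
  have h1' : d ^ 2 ≤ dist q u ^ 2 := by nlinarith [dist_nonneg (x := q) (y := u)]
  have h2' : d ^ 2 ≤ dist q v ^ 2 := by nlinarith [dist_nonneg (x := q) (y := v)]
  rw [dist_comm v p, dist_comm u p] at hst
  rw [dist_comm u p] at hsum
  have key : dist u v * d ^ 2 ≤ dist u v * (dist q p ^ 2 + dist p u * dist p v) := by
    rw [← hst]
    nlinarith [mul_le_mul_of_nonneg_right h1' (dist_nonneg (x := p) (y := v)),
      mul_le_mul_of_nonneg_right h2' (dist_nonneg (x := p) (y := u))]
  exact (mul_le_mul_iff_right₀ hduv).1 key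

lemma sqrt_two_mul_le {d m : ℝ} (hd : 0 ≤ d) (hm : 0 ≤ m) (h : 2 * d ^ 2 ≤ m ^ 2) :
    Real.sqrt 2 * d ≤ m := by
  have : Real.sqrt 2 * d = Real.sqrt (2 * d ^ 2) := by
    rw [Real.sqrt_mul (by norm_num), Real.sqrt_sq hd]
  rw [this]
  calc Real.sqrt (2 * d ^ 2) ≤ Real.sqrt (m ^ 2) := Real.sqrt_le_sqrt h
    _ = m := Real.sqrt_sq hm


lemma crossing_alg {d a b a' b' : ℝ} (hd : 0 < d)
    (ha0 : 0 ≤ a) (hb0 : 0 ≤ b) (ha'0 : 0 ≤ a') (hb'0 : 0 ≤ b')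
    (A : d ^ 2 ≤ a ^ 2 + a' * b') (B : d ^ 2 ≤ b ^ 2 + a' * b') :
    Real.sqrt 2 * d ≤ max (a + b) (a' + b') := by
  rcases le_or_gt (d ^ 2 / 2) (a' * b') with h | h
  · refine le_trans (sqrt_two_mul_le hd.le (by linarith) ?_) (le_max_right _ _)
    nlinarith [sq_nonneg (a' - b')]
  · refine le_trans (sqrt_two_mul_le hd.le (by linarith) ?_) (le_max_left _ _)
    have haa : d ^ 2 / 2 < a ^ 2 := by nlinarith
    have hbb : d ^ 2 / 2 < b ^ 2 := by nlinarith
    have hsq : d ^ 2 / 2 * (d ^ 2 / 2) < a ^ 2 * b ^ 2 :=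
      mul_lt_mul'' haa hbb (by positivity) (by positivity)
    have hab : d ^ 2 / 2 < a * b := by
      nlinarith [mul_nonneg ha0 hb0]
    nlinarith

/-- If four distinct points `x, y, x', y'` in the plane have all pairwise
distances `≥ d` and the open segments `(x,y)` and `(x',y')` cross, then
`max(|x−y|, |x'−y'|) ≥ √2 · d`. -/
theorem crossing_bonds_long
    (d : ℝ) (hd : 0 < d)
    (x y x' y' : EuclideanSpace ℝ (Fin 2))
    (hpair : List.Pairwise (fun p q => p ≠ q ∧ d ≤ dist p q) [x, y, x', y'])
    (hcross : (openSegment ℝ x y ∩ openSegment ℝ x' y').Nonempty) :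
    Real.sqrt 2 * d ≤ max (dist x y) (dist x' y') := by
  obtain ⟨p, hp1, hp2⟩ := hcross
  simp only [List.pairwise_cons, List.mem_cons, List.mem_singleton,
    List.not_mem_nil, forall_eq_or_imp, forall_eq] at hpair
  obtain ⟨⟨⟨hxy_ne, _⟩, ⟨_, hxx'⟩, ⟨_, hxy'⟩, _⟩, ⟨⟨_, hyx'⟩, ⟨_, hyy'⟩, _⟩,
    ⟨⟨hx'y'_ne, _⟩, _⟩, _⟩ := hpair
  have A := stewart_ineq d hd.le x hx'y'_ne hp2 hxx' hxy'
  have B := stewart_ineq d hd.le y hx'y'_ne hp2 hyx' hyy'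
  have hS : dist x p + dist p y = dist x y :=
    dist_add_dist_of_mem_segment (openSegment_subset_segment ℝ x y hp1)
  have hT : dist x' p + dist p y' = dist x' y' :=
    dist_add_dist_of_mem_segment (openSegment_subset_segment ℝ x' y' hp2)
  rw [dist_comm y p] at B
  rw [dist_comm x' p] at hT
  rw [← hS, ← hT]
  exact crossing_alg hd dist_nonneg dist_nonneg dist_nonneg dist_nonneg A B
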